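/- Let A and B be normal complex n×n matrices. Then ‖ |A| − |B| ‖_F ≤ ‖A − B‖_F, where |A| = (AᴴA)^{1/2} and |B| = (BᴴB)^{1/2}. -/

import Mathlib

open scoped BigOperators Matrix ComplexOrder

noncomputable def frob {m n : ℕ} (A : Matrix (Fin m) (Fin n) ℂ) : ℝ :=
  Real.sqrt (∑ i, ∑ j, ‖A i j‖ ^ 2)

noncomputable def absMat {m n : ℕ} (A : Matrix (Fin m) (Fin n) ℂ) :
    Matrix (Fin n) (Fin n) ℂ :=
  (Matrix.posSemidef_conjTranspose_mul_self A).isHermitian.eigenvectorUnitary.1 *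
    Matrix.diagonal ((↑) ∘ Real.sqrt ∘
      (Matrix.posSemidef_conjTranspose_mul_self A).isHermitian.eigenvalues) *
    (star (Matrix.posSemidef_conjTranspose_mul_self A).isHermitian.eigenvectorUnitary :
      Matrix (Fin n) (Fin n) ℂ)

noncomputable def svdMat (m n r : ℕ) (σ : ℕ → ℝ) : Matrix (Fin m) (Fin n) ℂ :=
  Matrix.of fun i j =>
    if (i : ℕ) = (j : ℕ) ∧ (i : ℕ) < r then ((σ ((i : ℕ) + 1) : ℝ) : ℂ) else 0

/-- `A` admits a singular value decomposition with singular values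
`σ 1, …, σ r` (indexed from 1) on the diagonal. -/
def HasSVD {m n : ℕ} (A : Matrix (Fin m) (Fin n) ℂ) (r : ℕ) (σ : ℕ → ℝ) : Prop :=
  ∃ (U : Matrix (Fin m) (Fin m) ℂ) (V : Matrix (Fin n) (Fin n) ℂ),
    Uᴴ * U = 1 ∧ U * Uᴴ = 1 ∧ Vᴴ * V = 1 ∧ V * Vᴴ = 1 ∧
    A = U * svdMat m n r σ * Vᴴ

/-- `σ 1 ≥ σ 2 ≥ … ≥ σ r > 0`. -/
def SingVals (r : ℕ) (σ : ℕ → ℝ) : Prop :=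
  (∀ j, 1 ≤ j → j ≤ r → 0 < σ j) ∧ ∀ j, 1 ≤ j → j < r → σ (j + 1) ≤ σ j

/-- Generalized polar decomposition: `A = Q * |A|`, where `Q` is a rank-`r` partial
isometry such that the column space of `Qᴴ` equals the column space of `|A|`. -/
def IsPolar {m n : ℕ} (A Q : Matrix (Fin m) (Fin n) ℂ) (r : ℕ) : Prop :=
  A = Q * absMat A ∧ Q * Qᴴ * Q = Q ∧ Q.rank = r ∧
    LinearMap.range (Matrix.mulVecLin Qᴴ) =
      LinearMap.range (Matrix.mulVecLin (absMat A))

namespace Kitt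

open Matrix

variable {m k : Type*} [Fintype m] [Fintype k] [DecidableEq m] [DecidableEq k]

noncomputable def frobSq (M : Matrix m k ℂ) : ℝ := ∑ i, ∑ j, ‖M i j‖ ^ 2

lemma frobSq_nonneg (M : Matrix m k ℂ) : 0 ≤ frobSq M := by
  apply Finset.sum_nonneg; intro i _
  apply Finset.sum_nonneg; intro j _
  positivity

lemma frobSq_eq_retrace (M : Matrix m k ℂ) : frobSq M = ((Mᴴ * M).trace).re := by
  have h : ((Mᴴ * M).trace) = ∑ j, ∑ i, (starRingEnd ℂ) (M i j) * M i j := by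
    simp [Matrix.trace, Matrix.diag, Matrix.mul_apply, conjTranspose_apply]
  rw [h, Complex.re_sum]
  rw [frobSq, Finset.sum_comm]
  refine Finset.sum_congr rfl fun j _ => ?_
  rw [Complex.re_sum]
  refine Finset.sum_congr rfl fun i _ => ?_
  rw [← Complex.normSq_eq_conj_mul_self, Complex.ofReal_re, ← Complex.sq_norm]

lemma frobSq_conjTranspose (M : Matrix m k ℂ) : frobSq Mᴴ = frobSq M := by
  simp only [frobSq, conjTranspose_apply, norm_star]
  exact Finset.sum_comm

lemma frobSq_unitary_left {U : Matrix m m ℂ} (hU : Uᴴ * U = 1)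
    (M : Matrix m k ℂ) : frobSq (U * M) = frobSq M := by
  rw [frobSq_eq_retrace, frobSq_eq_retrace, conjTranspose_mul,
    show Mᴴ * Uᴴ * (U * M) = Mᴴ * (Uᴴ * U) * M by
      rw [Matrix.mul_assoc, Matrix.mul_assoc, Matrix.mul_assoc],
    hU, Matrix.mul_one]

lemma frobSq_unitary_right {V : Matrix k k ℂ} (hV : V * Vᴴ = 1)
    (M : Matrix m k ℂ) : frobSq (M * V) = frobSq M := by
  rw [frobSq_eq_retrace, frobSq_eq_retrace, conjTranspose_mul,
    show Vᴴ * Mᴴ * (M * V) = Vᴴ * (Mᴴ * M * V) by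
      rw [Matrix.mul_assoc, Matrix.mul_assoc],
    Matrix.trace_mul_comm,
    show Mᴴ * M * V * Vᴴ = Mᴴ * M * (V * Vᴴ) by rw [Matrix.mul_assoc], hV, Matrix.mul_one]

variable [DecidableEq m] [DecidableEq k]

noncomputable def myAbs (M : Matrix m m ℂ) : Matrix m m ℂ :=
  (Matrix.posSemidef_conjTranspose_mul_self M).isHermitian.eigenvectorUnitary.1 *
    Matrix.diagonal ((↑) ∘ Real.sqrt ∘
      (Matrix.posSemidef_conjTranspose_mul_self M).isHermitian.eigenvalues) *
    (star (Matrix.posSemidef_conjTranspose_mul_self M).isHermitian.eigenvectorUnitary :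
      Matrix m m ℂ)

open scoped MatrixOrder

lemma myAbs_eq_sqrt (M : Matrix m m ℂ) : myAbs M = CFC.sqrt (Mᴴ * M) := by
  have hP := Matrix.posSemidef_conjTranspose_mul_self M
  rw [CFC.sqrt_eq_real_sqrt _ hP.nonneg, cfcₙ_eq_cfc, hP.isHermitian.cfc_eq, Matrix.IsHermitian.cfc,
    Unitary.conjStarAlgAut_apply]
  rfl

lemma myAbs_posSemidef (M : Matrix m m ℂ) : (myAbs M).PosSemidef := by
  rw [myAbs_eq_sqrt]; exact (CFC.sqrt_nonneg _).posSemidef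

lemma myAbs_mul_self (M : Matrix m m ℂ) : myAbs M * myAbs M = Mᴴ * M := by
  rw [myAbs_eq_sqrt]
  exact CFC.sqrt_mul_sqrt_self _ (Matrix.posSemidef_conjTranspose_mul_self M).nonneg

lemma myAbs_eq {M : Matrix m m ℂ} {T : Matrix m m ℂ} (hT : T.PosSemidef)
    (h2 : T ^ 2 = Mᴴ * M) : myAbs M = T := by
  rw [myAbs_eq_sqrt]; exact CFC.sqrt_unique (by rw [← sq]; exact h2) hT.nonneg

lemma myAbs_hermitian {X : Matrix m m ℂ} (hX : X.IsHermitian) :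
    myAbs X = (hX.eigenvectorUnitary : Matrix m m ℂ) *
      Matrix.diagonal (fun i => ((|hX.eigenvalues i| : ℝ) : ℂ)) *
      (hX.eigenvectorUnitary : Matrix m m ℂ)ᴴ := by
  apply myAbs_eq
  · have hd : Matrix.PosSemidef
        (Matrix.diagonal (fun i => ((|hX.eigenvalues i| : ℝ) : ℂ))) := by
      refine Matrix.posSemidef_diagonal_iff.mpr fun i => ?_
      rw [Complex.zero_le_real]
      exact abs_nonneg _
    exact hd.mul_mul_conjTranspose_same _
  · have hspec := hX.spectral_theorem
    have hUU : (hX.eigenvectorUnitary : Matrix m m ℂ)ᴴ *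
        (hX.eigenvectorUnitary : Matrix m m ℂ) = 1 := by
      simpa [Matrix.star_eq_conjTranspose] using
        (Matrix.mem_unitaryGroup_iff'.mp hX.eigenvectorUnitary.2)
    rw [hX.eq]
    set U : Matrix m m ℂ := (hX.eigenvectorUnitary : Matrix m m ℂ)
    calc (U * Matrix.diagonal (fun i => ((|hX.eigenvalues i| : ℝ) : ℂ)) * Uᴴ) ^ 2
        = U * (Matrix.diagonal (fun i => ((|hX.eigenvalues i| : ℝ) : ℂ)) *
            ((Uᴴ * U) * Matrix.diagonal (fun i => ((|hX.eigenvalues i| : ℝ) : ℂ)))) * Uᴴ := by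
          noncomm_ring
      _ = U * Matrix.diagonal (Complex.ofReal ∘ hX.eigenvalues) * Uᴴ *
            (U * Matrix.diagonal (Complex.ofReal ∘ hX.eigenvalues) * Uᴴ) := by
          rw [hUU, one_mul, Matrix.diagonal_mul_diagonal]
          have : (fun i => ((|hX.eigenvalues i| : ℝ) : ℂ) * ((|hX.eigenvalues i| : ℝ) : ℂ))
              = fun i => ((hX.eigenvalues i : ℝ) : ℂ) * ((hX.eigenvalues i : ℝ) : ℂ) := by
            funext i
            push_cast
            rw [← Complex.ofReal_mul, ← Complex.ofReal_mul, ← abs_mul, abs_mul_self]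
          rw [this, ← Matrix.diagonal_mul_diagonal]
          calc U * (Matrix.diagonal (fun i => ((hX.eigenvalues i : ℝ) : ℂ)) *
                Matrix.diagonal (fun i => ((hX.eigenvalues i : ℝ) : ℂ))) * Uᴴ
              = U * Matrix.diagonal (Complex.ofReal ∘ hX.eigenvalues) *
                ((Uᴴ * U) * (Matrix.diagonal (Complex.ofReal ∘ hX.eigenvalues) * Uᴴ)) := by
                rw [hUU, one_mul]; noncomm_ring
            _ = _ := by noncomm_ring
      _ = X * X := by
          have hspec' : X = U * Matrix.diagonal (Complex.ofReal ∘ hX.eigenvalues) * Uᴴ := by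
            simp only [Unitary.conjStarAlgAut_apply, Unitary.coe_star,
              Matrix.star_eq_conjTranspose] at hspec; exact hspec
          rw [← hspec']

/-- Kittaneh's inequality, Hermitian case. -/
lemma kittaneh_hermitian {X Y : Matrix m m ℂ} (hX : X.IsHermitian) (hY : Y.IsHermitian) :
    frobSq (myAbs X - myAbs Y) ≤ frobSq (X - Y) := by
  classical
  set U : Matrix m m ℂ := (hX.eigenvectorUnitary : Matrix m m ℂ) with hUdef
  set V : Matrix m m ℂ := (hY.eigenvectorUnitary : Matrix m m ℂ) with hVdef
  have hUU : Uᴴ * U = 1 := by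
    simpa [Matrix.star_eq_conjTranspose] using (Matrix.mem_unitaryGroup_iff'.mp hX.eigenvectorUnitary.2)
  have hUU' : U * Uᴴ = 1 := by
    simpa [Matrix.star_eq_conjTranspose] using (Matrix.mem_unitaryGroup_iff.mp hX.eigenvectorUnitary.2)
  have hVV : Vᴴ * V = 1 := by
    simpa [Matrix.star_eq_conjTranspose] using (Matrix.mem_unitaryGroup_iff'.mp hY.eigenvectorUnitary.2)
  have hVV' : V * Vᴴ = 1 := by
    simpa [Matrix.star_eq_conjTranspose] using (Matrix.mem_unitaryGroup_iff.mp hY.eigenvectorUnitary.2)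
  set d : m → ℝ := hX.eigenvalues
  set e : m → ℝ := hY.eigenvalues
  set W : Matrix m m ℂ := Uᴴ * V with hW
  -- conjugation identities
  have hXid : Uᴴ * X * V = Matrix.diagonal (Complex.ofReal ∘ d) * W := by
    have hspec := hX.spectral_theorem
    simp only [Unitary.conjStarAlgAut_apply, Unitary.coe_star,
      Matrix.star_eq_conjTranspose] at hspec
    rw [hspec]
    calc Uᴴ * (U * Matrix.diagonal (Complex.ofReal ∘ d) * Uᴴ) * V
        = (Uᴴ * U) * Matrix.diagonal (Complex.ofReal ∘ d) * (Uᴴ * V) := by noncomm_ring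
      _ = _ := by rw [hUU, one_mul, hW]
  have hYid : Uᴴ * Y * V = W * Matrix.diagonal (Complex.ofReal ∘ e) := by
    have hspec := hY.spectral_theorem
    simp only [Unitary.conjStarAlgAut_apply, Unitary.coe_star,
      Matrix.star_eq_conjTranspose] at hspec
    rw [hspec]
    calc Uᴴ * (V * Matrix.diagonal (Complex.ofReal ∘ e) * Vᴴ) * V
        = (Uᴴ * V) * Matrix.diagonal (Complex.ofReal ∘ e) * (Vᴴ * V) := by noncomm_ring
      _ = _ := by rw [hVV, mul_one, hW]
  have haXid : Uᴴ * myAbs X * V = Matrix.diagonal (fun i => ((|d i| : ℝ) : ℂ)) * W := by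
    rw [myAbs_hermitian hX]
    calc Uᴴ * (U * Matrix.diagonal (fun i => ((|d i| : ℝ) : ℂ)) * Uᴴ) * V
        = (Uᴴ * U) * Matrix.diagonal (fun i => ((|d i| : ℝ) : ℂ)) * (Uᴴ * V) := by noncomm_ring
      _ = _ := by rw [hUU, one_mul, hW]
  have haYid : Uᴴ * myAbs Y * V = W * Matrix.diagonal (fun i => ((|e i| : ℝ) : ℂ)) := by
    rw [myAbs_hermitian hY]
    calc Uᴴ * (V * Matrix.diagonal (fun i => ((|e i| : ℝ) : ℂ)) * Vᴴ) * V
        = (Uᴴ * V) * Matrix.diagonal (fun i => ((|e i| : ℝ) : ℂ)) * (Vᴴ * V) := by noncomm_ring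
      _ = _ := by rw [hVV, mul_one, hW]
  have hUunit : Uᴴᴴ * Uᴴ = 1 := by rwa [conjTranspose_conjTranspose]
  have l1 : frobSq (X - Y) = frobSq (Uᴴ * (X - Y) * V) := by
    rw [frobSq_unitary_right hVV', frobSq_unitary_left hUunit]
  have l2 : frobSq (myAbs X - myAbs Y) = frobSq (Uᴴ * (myAbs X - myAbs Y) * V) := by
    rw [frobSq_unitary_right hVV', frobSq_unitary_left hUunit]
  rw [l1, l2]
  have e1 : Uᴴ * (X - Y) * V = Matrix.diagonal (Complex.ofReal ∘ d) * W -
      W * Matrix.diagonal (Complex.ofReal ∘ e) := by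
    rw [← hXid, ← hYid]; noncomm_ring
  have e2 : Uᴴ * (myAbs X - myAbs Y) * V =
      Matrix.diagonal (fun i => ((|d i| : ℝ) : ℂ)) * W -
      W * Matrix.diagonal (fun i => ((|e i| : ℝ) : ℂ)) := by
    rw [← haXid, ← haYid]; noncomm_ring
  rw [e1, e2]
  unfold frobSq
  refine Finset.sum_le_sum fun i _ => Finset.sum_le_sum fun j _ => ?_
  simp only [Matrix.sub_apply, Matrix.diagonal_mul, Matrix.mul_diagonal, Function.comp_apply]
  have key : ∀ (a b : ℝ), ‖(a : ℂ) * W i j - W i j * (b : ℂ)‖ ^ 2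
      = (a - b) ^ 2 * ‖W i j‖ ^ 2 := by
    intro a b
    have : (a : ℂ) * W i j - W i j * (b : ℂ) = (((a - b : ℝ)) : ℂ) * W i j := by
      push_cast; ring
    rw [this, norm_mul, Complex.norm_real, mul_pow, Real.norm_eq_abs, sq_abs]
  rw [key, key]
  have habs : (|d i| - |e j|) ^ 2 ≤ (d i - e j) ^ 2 := by
    rw [← sq_abs (|d i| - |e j|), ← sq_abs (d i - e j)]
    exact pow_le_pow_left₀ (abs_nonneg _) (abs_abs_sub_abs_le_abs_sub _ _) 2
  have hw : (0:ℝ) ≤ ‖W i j‖ ^ 2 := by positivity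
  exact mul_le_mul_of_nonneg_right habs hw


section Blocks

open Matrix

variable {p : Type*} [Fintype p] [DecidableEq p]

noncomputable def herm (M : Matrix p p ℂ) : Matrix (p ⊕ p) (p ⊕ p) ℂ :=
  Matrix.fromBlocks 0 M Mᴴ 0

lemma herm_isHermitian (M : Matrix p p ℂ) : (herm M).IsHermitian := by
  unfold herm
  rw [Matrix.IsHermitian, Matrix.fromBlocks_conjTranspose]
  simp

lemma frobSq_fromBlocks (A B C D : Matrix p p ℂ) :
    frobSq (Matrix.fromBlocks A B C D) = frobSq A + frobSq B + frobSq C + frobSq D := by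
  simp only [frobSq, Fintype.sum_sum_type, Matrix.fromBlocks_apply₁₁,
    Matrix.fromBlocks_apply₁₂, Matrix.fromBlocks_apply₂₁, Matrix.fromBlocks_apply₂₂,
    Finset.sum_add_distrib]
  ring

lemma frobSq_zero : frobSq (0 : Matrix p p ℂ) = 0 := by simp [frobSq]

lemma myAbs_herm {M : Matrix p p ℂ} (hM : M * Mᴴ = Mᴴ * M) :
    myAbs (herm M) = Matrix.fromBlocks (myAbs M) 0 0 (myAbs M) := by
  apply myAbs_eq
  · have hP : (myAbs M).PosSemidef :=
      myAbs_posSemidef M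
    have : Matrix.fromBlocks (myAbs M) 0 0 (myAbs M) =
        (Matrix.fromBlocks (CFC.sqrt (myAbs M)) 0 0 (CFC.sqrt (myAbs M)))ᴴ *
          (Matrix.fromBlocks (CFC.sqrt (myAbs M)) 0 0 (CFC.sqrt (myAbs M))) := by
      rw [Matrix.fromBlocks_conjTranspose, Matrix.fromBlocks_multiply]
      simp [(CFC.sqrt_nonneg (myAbs M)).posSemidef.1.eq,
        CFC.sqrt_mul_sqrt_self (myAbs M) hP.nonneg]
    rw [this]
    exact Matrix.posSemidef_conjTranspose_mul_self _
  · have hh : (herm M)ᴴ = herm M := herm_isHermitian M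
    have hPP : myAbs M * myAbs M = Mᴴ * M :=
      myAbs_mul_self M
    rw [pow_two, Matrix.fromBlocks_multiply, hh]
    unfold herm
    rw [Matrix.fromBlocks_multiply]
    simp [hPP, hM]

end Blocks

end Kitt


theorem kittaneh_normal
    (n : ℕ) (A B : Matrix (Fin n) (Fin n) ℂ)
    (hA : A * Aᴴ = Aᴴ * A) (hB : B * Bᴴ = Bᴴ * B) :
    frob (absMat A - absMat B) ≤ frob (A - B) := by
  have key : Kitt.frobSq (Kitt.myAbs A - Kitt.myAbs B) ≤ Kitt.frobSq (A - B) := by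
    have h1 := Kitt.kittaneh_hermitian (Kitt.herm_isHermitian A) (Kitt.herm_isHermitian B)
    rw [Kitt.myAbs_herm hA, Kitt.myAbs_herm hB] at h1
    have hsub1 : Matrix.fromBlocks (Kitt.myAbs A) 0 0 (Kitt.myAbs A) -
        Matrix.fromBlocks (Kitt.myAbs B) 0 0 (Kitt.myAbs B) =
        Matrix.fromBlocks (Kitt.myAbs A - Kitt.myAbs B) 0 0 (Kitt.myAbs A - Kitt.myAbs B) := by
      rw [sub_eq_add_neg, Matrix.fromBlocks_neg, Matrix.fromBlocks_add]
      simp [sub_eq_add_neg]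
    have hsub2 : Kitt.herm A - Kitt.herm B =
        Matrix.fromBlocks 0 (A - B) (Aᴴ - Bᴴ) 0 := by
      unfold Kitt.herm
      rw [sub_eq_add_neg, Matrix.fromBlocks_neg, Matrix.fromBlocks_add]
      simp [sub_eq_add_neg]
    rw [hsub1, hsub2, Kitt.frobSq_fromBlocks, Kitt.frobSq_fromBlocks,
      Kitt.frobSq_zero] at h1
    have hct : Kitt.frobSq (Aᴴ - Bᴴ) = Kitt.frobSq (A - B) := by
      rw [← Matrix.conjTranspose_sub, Kitt.frobSq_conjTranspose]
    rw [hct] at h1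
    linarith
  show Real.sqrt (Kitt.frobSq (Kitt.myAbs A - Kitt.myAbs B)) ≤
    Real.sqrt (Kitt.frobSq (A - B))
  exact Real.sqrt_le_sqrt key
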